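/- Let A and B be separable C*-algebras and suppose B is the limit of an inductive system (B_n, β_n) of C*-algebras. If α: A → B is a semiprojective *-homomorphism, then there exist an integer n ≥ 1 and a *-homomorphism α̃: A → B_n such that β_{∞,n} ∘ α̃ is homotopic to α. -/

import Mathlib

open Filter Topology Set
open scoped NNReal ZeroAtInfty OnePoint CStarAlgebra

noncomputable section

namespace AsymPaper

universe u v w

section Basic

variable {A : Type*} {B : Type*} {D : Type*} {A' : Type*} {A₀ : Type*}
variable [NonUnitalCStarAlgebra A] [NonUnitalCStarAlgebra B] [NonUnitalCStarAlgebra D]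
variable [NonUnitalCStarAlgebra A'] [NonUnitalCStarAlgebra A₀]

/-- An asymptotic morphism `A ⇒ B` is a family of self-adjoint (ℂ-linear and star-preserving)
maps `φ_t : A → B`, continuous in `t`, which is asymptotically multiplicative. -/
def IsAsymptoticMorphism (φ : ℝ≥0 → A → B) : Prop :=
  (∀ t, IsLinearMap ℂ (φ t)) ∧ (∀ t a, φ t (star a) = star (φ t a)) ∧
    (∀ a, Continuous fun t => φ t a) ∧
    (∀ a b : A, Tendsto (fun t => ‖φ t (a * b) - φ t a * φ t b‖) atTop (𝓝 0))

/-- Equivalence of asymptotic morphisms: `φ_t(a) - ψ_t(a) → 0` for every `a`. -/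
def AsympEquiv (φ ψ : ℝ≥0 → A → B) : Prop :=
  ∀ a, Tendsto (fun t => ‖φ t a - ψ t a‖) atTop (𝓝 0)

/-- Asymptotic homotopy of asymptotic morphisms `A ⇒ B`, witnessed by an asymptotic
morphism `A ⇒ C([0,1], B)`. -/
def AsympHomotopic (φ ψ : ℝ≥0 → A → B) : Prop :=
  ∃ θ : ℝ≥0 → A → C(unitInterval, B), IsAsymptoticMorphism θ ∧
    AsympEquiv (fun t a => θ t a 0) φ ∧ AsympEquiv (fun t a => θ t a 1) ψ

end Basic

/-- A bundled asymptotic morphism. -/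
structure AsymptoticMorphism (A : Type u) (B : Type v)
    [NonUnitalCStarAlgebra A] [NonUnitalCStarAlgebra B] : Type (max u v) where
  toFun : ℝ≥0 → A → B
  isAsymptoticMorphism : IsAsymptoticMorphism toFun

section Classes

variable {A : Type*} {B : Type*} {D : Type*} {A' : Type*} {A₀ : Type*}
variable [NonUnitalCStarAlgebra A] [NonUnitalCStarAlgebra B] [NonUnitalCStarAlgebra D]
variable [NonUnitalCStarAlgebra A'] [NonUnitalCStarAlgebra A₀]

/-- The relation of asymptotic homotopy on bundled asymptotic morphisms. -/
def AsympRel (φ ψ : AsymptoticMorphism A B) : Prop := AsympHomotopic φ.toFun ψ.toFun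

end Classes

/-- `[[A, B]]`: homotopy classes of asymptotic morphisms from `A` to `B`. -/
def AsympClass (A : Type u) (B : Type v)
    [NonUnitalCStarAlgebra A] [NonUnitalCStarAlgebra B] : Type (max u v) :=
  Quot (@AsympRel A B _ _)

section Classes2

variable {A : Type*} {B : Type*} {D : Type*} {A' : Type*} {A₀ : Type*}
variable [NonUnitalCStarAlgebra A] [NonUnitalCStarAlgebra B] [NonUnitalCStarAlgebra D]
variable [NonUnitalCStarAlgebra A'] [NonUnitalCStarAlgebra A₀]

/-- `[[φ]]`, the asymptotic homotopy class of an asymptotic morphism. -/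
def AsympClass.mk (φ : AsymptoticMorphism A B) : AsympClass A B := Quot.mk _ φ

/-- A ⋆-homomorphism viewed as a (constant) family of maps. -/
def constFun (f : A →⋆ₙₐ[ℂ] B) : ℝ≥0 → A → B := fun _ a => f a

theorem isAsymptoticMorphism_constFun (f : A →⋆ₙₐ[ℂ] B) :
    IsAsymptoticMorphism (constFun f) := by
  refine ⟨fun t => ⟨fun x y => map_add f x y, fun c x => map_smul f c x⟩,
    fun t a => map_star f a, fun a => continuous_const, fun a b => ?_⟩
  simp only [constFun, map_mul, sub_self, norm_zero]
  exact tendsto_const_nhds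

/-- A ⋆-homomorphism viewed as a (constant) asymptotic morphism. -/
def constAM (f : A →⋆ₙₐ[ℂ] B) : AsymptoticMorphism A B :=
  ⟨constFun f, isAsymptoticMorphism_constFun f⟩

/-- The class `[[f]] ∈ [[A, B]]` of a ⋆-homomorphism. -/
def constClass (f : A →⋆ₙₐ[ℂ] B) : AsympClass A B := AsympClass.mk (constAM f)

/-- Precomposition of a family of maps with a ⋆-homomorphism. -/
def compHomFun {B : Type*} (φ : ℝ≥0 → A → B) (γ : A' →⋆ₙₐ[ℂ] A) : ℝ≥0 → A' → B :=
  fun t a => φ t (γ a)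

theorem IsAsymptoticMorphism.compHomFun {φ : ℝ≥0 → A → B} (hφ : IsAsymptoticMorphism φ)
    (γ : A' →⋆ₙₐ[ℂ] A) : IsAsymptoticMorphism (AsymPaper.compHomFun φ γ) := by
  obtain ⟨h1, h2, h3, h4⟩ := hφ
  refine ⟨fun t => ⟨fun x y => ?_, fun c x => ?_⟩, fun t a => ?_, fun a => h3 (γ a),
    fun a b => ?_⟩
  · show φ t (γ (x + y)) = φ t (γ x) + φ t (γ y)
    rw [map_add]; exact (h1 t).map_add _ _
  · show φ t (γ (c • x)) = c • φ t (γ x)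
    rw [map_smul]; exact (h1 t).map_smul _ _
  · show φ t (γ (star a)) = star (φ t (γ a))
    rw [map_star]; exact h2 t _
  · show Tendsto (fun t => ‖φ t (γ (a * b)) - φ t (γ a) * φ t (γ b)‖) atTop (𝓝 0)
    simpa only [map_mul] using h4 (γ a) (γ b)

theorem AsympHomotopic.compHomFun {φ ψ : ℝ≥0 → A → B} (h : AsympHomotopic φ ψ)
    (γ : A' →⋆ₙₐ[ℂ] A) :
    AsympHomotopic (AsymPaper.compHomFun φ γ) (AsymPaper.compHomFun ψ γ) := by
  obtain ⟨θ, hθ, h0, h1⟩ := h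
  exact ⟨AsymPaper.compHomFun θ γ, hθ.compHomFun γ, fun a => h0 (γ a), fun a => h1 (γ a)⟩

/-- Precomposition of an asymptotic morphism with a ⋆-homomorphism. -/
def AsymptoticMorphism.compHom (φ : AsymptoticMorphism A B) (γ : A' →⋆ₙₐ[ℂ] A) :
    AsymptoticMorphism A' B :=
  ⟨AsymPaper.compHomFun φ.toFun γ, φ.isAsymptoticMorphism.compHomFun γ⟩

/-- The map `[[A, B]] → [[A', B]]` induced by precomposition with a ⋆-homomorphism. -/
def compClassMap (γ : A' →⋆ₙₐ[ℂ] A) : AsympClass A B → AsympClass A' B :=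
  Quot.lift (fun φ => AsympClass.mk (φ.compHom γ))
    (fun φ ψ h => Quot.sound (AsympHomotopic.compHomFun h γ))

/-- Postcomposition of a family of maps with a ⋆-homomorphism. -/
def postHomFun {A : Type*} (ψ : B →⋆ₙₐ[ℂ] D) (φ : ℝ≥0 → A → B) : ℝ≥0 → A → D :=
  fun t a => ψ (φ t a)

theorem IsAsymptoticMorphism.postHomFun {φ : ℝ≥0 → A → B} (hφ : IsAsymptoticMorphism φ)
    (ψ : B →⋆ₙₐ[ℂ] D) : IsAsymptoticMorphism (AsymPaper.postHomFun ψ φ) := by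
  obtain ⟨h1, h2, h3, h4⟩ := hφ
  refine ⟨fun t => ⟨fun x y => ?_, fun c x => ?_⟩, fun t a => ?_,
    fun a => (map_continuous ψ).comp (h3 a), fun a b => ?_⟩
  · show ψ (φ t (x + y)) = ψ (φ t x) + ψ (φ t y)
    rw [(h1 t).map_add, map_add]
  · show ψ (φ t (c • x)) = c • ψ (φ t x)
    rw [(h1 t).map_smul, map_smul]
  · show ψ (φ t (star a)) = star (ψ (φ t a))
    rw [h2, map_star]
  · refine squeeze_zero (fun t => norm_nonneg _) (fun t => ?_) (h4 a b)
    show ‖ψ (φ t (a * b)) - ψ (φ t a) * ψ (φ t b)‖ ≤ _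
    rw [← map_mul, ← map_sub]
    exact NonUnitalStarAlgHom.norm_apply_le ψ _

theorem AsympEquiv.postHomFun {φ φ' : ℝ≥0 → A → B} (h : AsympEquiv φ φ')
    (ψ : B →⋆ₙₐ[ℂ] D) : AsympEquiv (AsymPaper.postHomFun ψ φ) (AsymPaper.postHomFun ψ φ') := by
  intro a
  refine squeeze_zero (fun t => norm_nonneg _) (fun t => ?_) (h a)
  show ‖ψ (φ t a) - ψ (φ' t a)‖ ≤ _
  rw [← map_sub]
  exact NonUnitalStarAlgHom.norm_apply_le ψ _

/-- Pointwise postcomposition on continuous maps, as a ⋆-homomorphism. -/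
def cmPostHom {X : Type*} [TopologicalSpace X] (ψ : B →⋆ₙₐ[ℂ] D) :
    C(X, B) →⋆ₙₐ[ℂ] C(X, D) where
  toFun f := ⟨fun x => ψ (f x), (map_continuous ψ).comp f.continuous⟩
  map_smul' c f := by ext x; simp
  map_zero' := by ext x; simp
  map_add' f g := by ext x; simp
  map_mul' f g := by ext x; simp
  map_star' f := by ext x; simp [map_star]

theorem AsympHomotopic.postHomFun {φ φ' : ℝ≥0 → A → B} (h : AsympHomotopic φ φ')
    (ψ : B →⋆ₙₐ[ℂ] D) :
    AsympHomotopic (AsymPaper.postHomFun ψ φ) (AsymPaper.postHomFun ψ φ') := by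
  obtain ⟨θ, hθ, h0, h1⟩ := h
  exact ⟨AsymPaper.postHomFun (cmPostHom ψ) θ, hθ.postHomFun _,
    fun a => AsympEquiv.postHomFun h0 ψ a, fun a => AsympEquiv.postHomFun h1 ψ a⟩

/-- The map `[[A, B]] → [[A, D]]` induced by postcomposition with a ⋆-homomorphism. -/
def postClassMap (ψ : B →⋆ₙₐ[ℂ] D) : AsympClass A B → AsympClass A D :=
  Quot.lift
    (fun φ => AsympClass.mk ⟨AsymPaper.postHomFun ψ φ.toFun, φ.isAsymptoticMorphism.postHomFun ψ⟩)
    (fun φ φ' h => Quot.sound (AsympHomotopic.postHomFun h ψ))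

/-- Genuine homotopy of ⋆-homomorphisms. -/
def HomHomotopic (φ ψ : A →⋆ₙₐ[ℂ] B) : Prop :=
  ∃ H : A →⋆ₙₐ[ℂ] C(unitInterval, B), (∀ a, H a 0 = φ a) ∧ (∀ a, H a 1 = ψ a)

/-- The relation on ⋆-homomorphisms of being asymptotically homotopic
(as constant asymptotic morphisms). -/
def HRel (f g : A →⋆ₙₐ[ℂ] B) : Prop := AsympHomotopic (constFun f) (constFun g)

/-- The point-norm topology on the space of ⋆-homomorphisms. -/
instance homTopology : TopologicalSpace (A →⋆ₙₐ[ℂ] B) :=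
  TopologicalSpace.induced (fun f => (f : A → B)) inferInstance

end Classes2

/-- `H(A, B)`: the image of `Hom(A,B)` in `[[A,B]]`, realized as the quotient of `Hom(A, B)` by
asymptotic homotopy; it carries the quotient topology coming from the point-norm topology. -/
def HClass (A : Type u) (B : Type v) [NonUnitalCStarAlgebra A] [NonUnitalCStarAlgebra B] :
    Type (max u v) :=
  Quot (@HRel A B _ _)

section Classes3

variable {A : Type*} {B : Type*} {D : Type*} {A' : Type*} {A₀ : Type*}
variable [NonUnitalCStarAlgebra A] [NonUnitalCStarAlgebra B] [NonUnitalCStarAlgebra D]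
variable [NonUnitalCStarAlgebra A'] [NonUnitalCStarAlgebra A₀]

instance HClass.instTopologicalSpace (A : Type u) (B : Type v)
    [NonUnitalCStarAlgebra A] [NonUnitalCStarAlgebra B] : TopologicalSpace (HClass A B) :=
  inferInstanceAs (TopologicalSpace (Quot (@HRel A B _ _)))

/-- The class in `H(A, B)` of a ⋆-homomorphism. -/
def HClass.mk (f : A →⋆ₙₐ[ℂ] B) : HClass A B := Quot.mk _ f

/-- The map `H(A, B) → H(A', B)` induced by precomposition with a ⋆-homomorphism. -/
def hcompClassMap (γ : A' →⋆ₙₐ[ℂ] A) : HClass A B → HClass A' B :=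
  Quot.lift (fun f => HClass.mk (f.comp γ))
    (fun f g h => Quot.sound (AsympHomotopic.compHomFun h γ))

/-- The zero ⋆-homomorphism. -/
def zeroHom (A B : Type*) [NonUnitalCStarAlgebra A] [NonUnitalCStarAlgebra B] :
    A →⋆ₙₐ[ℂ] B where
  toFun _ := 0
  map_smul' _ _ := by simp
  map_zero' := rfl
  map_add' _ _ := by simp
  map_mul' _ _ := by simp
  map_star' _ := by simp

end Classes3

section Systems

/-- The transition maps of an inductive system. -/
def transit {A : ℕ → Type u} [∀ n, NonUnitalCStarAlgebra (A n)]
    (α : ∀ n, A n →⋆ₙₐ[ℂ] A (n + 1)) {n m : ℕ} (hnm : n ≤ m) (a : A n) : A m :=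
  Nat.leRecOn hnm (fun {k} x => α k x) a

/-- `(L, ι)` is the inductive limit of the system `(A, α)`: the maps are compatible, the union of
their ranges is dense, and the norm of `ι n a` is the limit of the norms along the system. -/
def IsInductiveLimit {A : ℕ → Type u} [∀ n, NonUnitalCStarAlgebra (A n)]
    (α : ∀ n, A n →⋆ₙₐ[ℂ] A (n + 1)) (L : Type v) [NonUnitalCStarAlgebra L]
    (ι : ∀ n, A n →⋆ₙₐ[ℂ] L) : Prop :=
  (∀ n, (ι (n + 1)).comp (α n) = ι n) ∧
    Dense (⋃ n, Set.range (ι n)) ∧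
    ∀ (n : ℕ) (a : A n),
      Tendsto (fun m => ‖transit α (Nat.le_add_right n m) a‖) atTop (𝓝 ‖ι n a‖)

/-- A ⋆-homomorphism `α : A₀ → A` is semiprojective if for every inductive system with surjective
connecting maps and limit `L` and every ⋆-homomorphism `φ : A → L`, the composition `φ ∘ α`
lifts to some finite stage of the system. -/
def IsSemiprojective.{w₁, u₁, v₁} {A₀ : Type u₁} {A : Type v₁}
    [NonUnitalCStarAlgebra A₀] [NonUnitalCStarAlgebra A] (α : A₀ →⋆ₙₐ[ℂ] A) : Prop :=
  ∀ (B : ℕ → Type w₁) [∀ n, NonUnitalCStarAlgebra (B n)]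
    (β : ∀ n, B n →⋆ₙₐ[ℂ] B (n + 1)) (L : Type w₁) [NonUnitalCStarAlgebra L]
    (ι : ∀ n, B n →⋆ₙₐ[ℂ] L),
    (∀ n, Function.Surjective (β n)) → IsInductiveLimit β L ι →
      ∀ φ : A →⋆ₙₐ[ℂ] L, ∃ (n : ℕ) (ψ : A₀ →⋆ₙₐ[ℂ] B n), (ι n).comp ψ = φ.comp α

end Systems

/-- A separable C⋆-algebra together with a semiprojective ⋆-homomorphism into `A`. -/
structure SemiprojectivePair (A : Type u) [NonUnitalCStarAlgebra A] : Type (u + 1) where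
  carrier : Type u
  [inst : NonUnitalCStarAlgebra carrier]
  [sep : TopologicalSpace.SeparableSpace carrier]
  hom : carrier →⋆ₙₐ[ℂ] A
  semiproj : IsSemiprojective.{u} hom

attribute [instance] SemiprojectivePair.inst SemiprojectivePair.sep

/-- A bundled separable C⋆-algebra. -/
structure SeparableCStarAlgebra : Type (u + 1) where
  carrier : Type u
  [inst : NonUnitalCStarAlgebra carrier]
  [sep : TopologicalSpace.SeparableSpace carrier]

attribute [instance] SeparableCStarAlgebra.inst SeparableCStarAlgebra.sep

section Pullback

variable {A : Type u} {A' : Type*} {B : Type v}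
variable [NonUnitalCStarAlgebra A] [NonUnitalCStarAlgebra A'] [NonUnitalCStarAlgebra B]

/-- For a semiprojective `γ : A' → A`, every class in `[[A, B]]` composed with `γ` is represented
by a genuine ⋆-homomorphism; `pullbackH γ` sends the class to the corresponding element of
`H(A', B)`.  (For non-semiprojective `γ` the junk value `0` is used when no representative
exists.) -/
def pullbackH (γ : A' →⋆ₙₐ[ℂ] A) (x : AsympClass A B) : HClass A' B :=
  @dite _ (∃ f : A' →⋆ₙₐ[ℂ] B, compClassMap γ x = constClass f) (Classical.propDecidable _)
    (fun h => HClass.mk h.choose) (fun _ => HClass.mk (zeroHom A' B))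

end Pullback

/-- The topology on `[[A, B]]`: the weakest topology making `pullbackH α : [[A,B]] → H(A₀,B)`
continuous for every separable C⋆-algebra `A₀` and every semiprojective `α : A₀ → A`. -/
instance AsympClass.topologicalSpace (A : Type u) (B : Type v)
    [NonUnitalCStarAlgebra A] [NonUnitalCStarAlgebra B] :
    TopologicalSpace (AsympClass A B) :=
  ⨅ P : SemiprojectivePair A,
    TopologicalSpace.induced (pullbackH (B := B) P.hom) inferInstance



section InvLim

/-- The inverse (projective) limit of a sequence of spaces, as a subspace of the product. -/
def InvLim (X : ℕ → Type w) (g : ∀ n, X (n + 1) → X n) : Type w :=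
  { x : ∀ n, X n // ∀ n, g n (x (n + 1)) = x n }

instance InvLim.instTopologicalSpace (X : ℕ → Type w) [∀ n, TopologicalSpace (X n)]
    (g : ∀ n, X (n + 1) → X n) : TopologicalSpace (InvLim X g) :=
  inferInstanceAs (TopologicalSpace { x : ∀ n, X n // ∀ n, g n (x (n + 1)) = x n })

end InvLim

section HLim

variable {A : ℕ → Type u} [∀ n, NonUnitalCStarAlgebra (A n)]
variable {B : ℕ → Type v} [∀ n, NonUnitalCStarAlgebra (B n)]
variable {L : Type w} [NonUnitalCStarAlgebra L]

/-- The defining formula for the homotopy limit of a strong homotopy morphism of inductive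
systems: for `a ∈ A n` and `m ≤ t < m + 1` (with `m ≥ n`) the value is
`ι_{f(m+1)} (h_m (α_{m,n} a) (t - m))`. -/
def hLimFormula (α : ∀ n, A n →⋆ₙₐ[ℂ] A (n + 1)) (ιB : ∀ n, B n →⋆ₙₐ[ℂ] L) (f : ℕ → ℕ)
    (h : ∀ n, A n →⋆ₙₐ[ℂ] C(unitInterval, B (f (n + 1)))) (n : ℕ) (a : A n) (t : ℝ≥0) : L :=
  ιB (f (max n ⌊(t : ℝ)⌋₊ + 1))
    (h (max n ⌊(t : ℝ)⌋₊) (transit α (le_max_left n ⌊(t : ℝ)⌋₊) a)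
      (Set.projIcc (0 : ℝ) 1 zero_le_one ((t : ℝ) - (max n ⌊(t : ℝ)⌋₊ : ℕ))))

/-- `φ` is (a representative of) the homotopy limit of the strong homotopy morphism given by
`(f, φ_n, h_n)`: it is an asymptotic morphism agreeing asymptotically with the defining formula
on each `A n`. -/
def IsHomotopyLimit (α : ∀ n, A n →⋆ₙₐ[ℂ] A (n + 1)) {AL : Type*} [NonUnitalCStarAlgebra AL]
    (ιA : ∀ n, A n →⋆ₙₐ[ℂ] AL) (ιB : ∀ n, B n →⋆ₙₐ[ℂ] L) (f : ℕ → ℕ)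
    (h : ∀ n, A n →⋆ₙₐ[ℂ] C(unitInterval, B (f (n + 1)))) (φ : ℝ≥0 → AL → L) : Prop :=
  IsAsymptoticMorphism φ ∧
    ∀ (n : ℕ) (a : A n),
      Tendsto (fun t => ‖φ t (ιA n a) - hLimFormula α ιB f h n a t‖) atTop (𝓝 0)

end HLim

section CH

variable {A : Type u} {B : Type v} {D : Type w}
variable [NonUnitalCStarAlgebra A] [NonUnitalCStarAlgebra B] [NonUnitalCStarAlgebra D]

/-- An (increasing) reparametrization: a homeomorphism of `[0, ∞)`. -/
def IsReparam (r : ℝ≥0 → ℝ≥0) : Prop := ∃ e : ℝ≥0 ≃ₜ ℝ≥0, (e : ℝ≥0 → ℝ≥0) = r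

/-- The composition `(ψ_{r(t)} ∘ φ_t)_t` of two families along a reparametrization `r`. -/
def compAlong (ψ : ℝ≥0 → B → D) (r : ℝ≥0 → ℝ≥0) (φ : ℝ≥0 → A → B) : ℝ≥0 → A → D :=
  fun t a => ψ (r t) (φ t a)

/-- `F` is the Connes–Higson composition `[[A,B]] × [[B,D]] → [[A,D]]`: for all representatives
`φ, ψ` there is `r₀` such that for every reparametrization `r ≥ r₀`, the family
`(ψ_{r(t)} ∘ φ_t)_t` is an asymptotic morphism whose class is `F [[φ]] [[ψ]]`. -/
def IsCHComposition (F : AsympClass A B → AsympClass B D → AsympClass A D) : Prop :=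
  ∀ (φ : AsymptoticMorphism A B) (ψ : AsymptoticMorphism B D),
    ∃ r₀ : ℝ≥0 → ℝ≥0, ∀ r : ℝ≥0 → ℝ≥0, IsReparam r → (∀ t, r₀ t ≤ r t) →
      ∃ hr : IsAsymptoticMorphism (compAlong ψ.toFun r φ.toFun),
        F (AsympClass.mk φ) (AsympClass.mk ψ) = AsympClass.mk ⟨compAlong ψ.toFun r φ.toFun, hr⟩

end CH

section Ev

/-- Evaluation at a point, as a ⋆-homomorphism `C(X, B) → B`. -/
def evCM (X : Type w) [TopologicalSpace X] [CompactSpace X]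
    (B : Type v) [NonUnitalCStarAlgebra B] (x : X) : C(X, B) →⋆ₙₐ[ℂ] B where
  toFun f := f x
  map_smul' _ _ := rfl
  map_zero' := rfl
  map_add' _ _ := rfl
  map_mul' _ _ := rfl
  map_star' _ := rfl

end Ev

end AsymPaper


open AsymPaper Filter Topology TopologicalSpace
open scoped NNReal ZeroAtInfty OnePoint CStarAlgebra

universe u v w


set_option synthInstance.maxHeartbeats 1000000

namespace Stmt6Aux

variable {A : ℕ → Type u} [∀ n, NonUnitalCStarAlgebra (A n)]
  (α : ∀ n, A n →⋆ₙₐ[ℂ] A (n + 1))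

theorem transit_self {n : ℕ} (h : n ≤ n) (a : A n) : transit α h a = a :=
  Nat.leRecOn_self a

theorem transit_succ {n m : ℕ} (h : n ≤ m) (h' : n ≤ m + 1) (a : A n) :
    transit α h' a = α m (transit α h a) :=
  Nat.leRecOn_succ h a

theorem norm_transit_le {n m : ℕ} (h : n ≤ m) (a : A n) : ‖transit α h a‖ ≤ ‖a‖ := by
  induction m with
  | zero => obtain rfl : n = 0 := Nat.le_zero.mp h; rw [transit_self]
  | succ m ih =>
    rcases Nat.lt_or_ge n (m+1) with hlt | hge
    · have hm : n ≤ m := Nat.lt_succ_iff.mp hlt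
      rw [transit_succ α hm h a]
      exact (NonUnitalStarAlgHom.norm_apply_le _ _).trans (ih hm)
    · obtain rfl : n = m + 1 := le_antisymm h hge
      rw [transit_self]

variable {L : Type u} [NonUnitalCStarAlgebra L] {ι : ∀ n, A n →⋆ₙₐ[ℂ] L}

theorem iota_transit (hcomp : ∀ n, (ι (n + 1)).comp (α n) = ι n) {n m : ℕ} (h : n ≤ m)
    (a : A n) : ι m (transit α h a) = ι n a := by
  induction m with
  | zero => obtain rfl : n = 0 := Nat.le_zero.mp h; rw [transit_self]
  | succ m ih =>
    rcases Nat.lt_or_ge n (m+1) with hlt | hge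
    · have hm : n ≤ m := Nat.lt_succ_iff.mp hlt
      rw [transit_succ α hm h a]
      have := congrArg (fun f : A m →⋆ₙₐ[ℂ] L => f (transit α hm a)) (hcomp m)
      simpa using this.trans (ih hm)
    · obtain rfl : n = m + 1 := le_antisymm h hge
      rw [transit_self]

/-! ### the interpolation points -/

def tp (k : ℕ) : unitInterval :=
  ⟨1 - (2⁻¹ : ℝ) ^ k, by
    constructor
    · simp only [sub_nonneg]
      exact pow_le_one₀ (by norm_num) (by norm_num)
    · simp only [tsub_le_iff_right, le_add_iff_nonneg_right]
      positivity⟩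

theorem tp_mono {k l : ℕ} (h : k ≤ l) : tp k ≤ tp l := by
  simp only [tp, Subtype.mk_le_mk, sub_le_sub_iff_left]
  exact sub_le_sub_left (pow_le_pow_of_le_one (a := (2⁻¹ : ℝ)) (by norm_num) (by norm_num) h) 1

theorem tp_coe (k : ℕ) : (tp k : ℝ) = 1 - (2⁻¹ : ℝ) ^ k := rfl

theorem tp_lt_succ (k : ℕ) : (tp k : ℝ) < tp (k+1) := by
  simp only [tp_coe, sub_lt_sub_iff_left]
  exact pow_lt_pow_right_of_lt_one₀ (by norm_num) (by norm_num) (Nat.lt_succ_self k)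

theorem tendsto_tp : Tendsto (fun k => (tp k : ℝ)) atTop (𝓝 1) := by
  have : Tendsto (fun k => (2⁻¹ : ℝ) ^ k) atTop (𝓝 0) :=
    tendsto_pow_atTop_nhds_zero_of_lt_one (by norm_num) (by norm_num)
  have h2 : Tendsto (fun k : ℕ => 1 - (2⁻¹ : ℝ) ^ k) atTop (𝓝 (1 - 0)) :=
    tendsto_const_nhds.sub this
  simpa [tp_coe] using h2

/-- max with a constant, as a continuous self-map of the interval. -/
def maxC (c : unitInterval) : C(unitInterval, unitInterval) :=
  ⟨fun s => ⟨max s.1 c.1, ⟨le_max_of_le_left s.2.1, max_le s.2.2 c.2.2⟩⟩,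
    Continuous.subtype_mk (continuous_subtype_val.max continuous_const) _⟩

theorem maxC_apply (c s : unitInterval) : (maxC c s : ℝ) = max s.1 c.1 := rfl

theorem maxC_eq_self {c s : unitInterval} (h : c ≤ s) : maxC c s = s :=
  Subtype.ext (max_eq_left h)

theorem maxC_eq_const {c s : unitInterval} (h : s ≤ c) : maxC c s = c :=
  Subtype.ext (max_eq_right h)

theorem maxC_one (c : unitInterval) : maxC c 1 = 1 := maxC_eq_self c.2.2

end Stmt6Aux

noncomputable section Dev3

namespace Stmt6Aux


variable {B : ℕ → Type u} [∀ n, NonUnitalCStarAlgebra (B n)]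
variable {BL : Type u} [NonUnitalCStarAlgebra BL]

/-- The ambient C⋆-algebra for the telescope construction. -/
abbrev Amb (B : ℕ → Type u) [∀ n, NonUnitalCStarAlgebra (B n)]
    (BL : Type u) [NonUnitalCStarAlgebra BL] : Type u :=
  (lp (fun k => B k) (⊤ : ENNReal)) × C(unitInterval, BL)

/-- Coordinate evaluation on `lp _ ∞` as a ⋆-homomorphism. -/
def lpEv (k : ℕ) : lp (fun k => B k) (⊤ : ENNReal) →⋆ₙₐ[ℂ] B k where
  toFun x := x k
  map_smul' c x := by have := congrFun (lp.coeFn_smul c x) k; simpa using this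
  map_zero' := by have := congrFun (lp.coeFn_zero (E := fun k => B k) (⊤ : ENNReal)) k; simpa using this
  map_add' x y := by have := congrFun (lp.coeFn_add x y) k; simpa using this
  map_mul' x y := by have := congrFun (lp.infty_coeFn_mul x y) k; simpa using this
  map_star' x := by have := congrFun (lp.coeFn_star x) k; simpa using this

/-- Zeroing out the `m`-th coordinate, as a ⋆-homomorphism. -/
def zeroOut (m : ℕ) : lp (fun k => B k) (⊤ : ENNReal) →⋆ₙₐ[ℂ] lp (fun k => B k) (⊤ : ENNReal) where
  toFun x := ⟨fun k => if k = m then 0 else x k, by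
    apply memℓp_infty
    refine ⟨‖x‖, ?_⟩
    rintro - ⟨k, rfl⟩
    by_cases h : k = m
    · simpa [h] using norm_nonneg x
    · simpa [h] using lp.norm_apply_le_norm ENNReal.top_ne_zero x k⟩
  map_smul' c x := by
    apply lp.ext; funext k
    simp only [lp.coeFn_smul, Pi.smul_apply]
    by_cases h : k = m <;> simp [h]
  map_zero' := by
    apply lp.ext; funext k
    simp only [lp.coeFn_zero, Pi.zero_apply]
    by_cases h : k = m <;> simp [h]
  map_add' x y := by
    apply lp.ext; funext k
    simp only [lp.coeFn_add, Pi.add_apply]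
    by_cases h : k = m <;> simp [h]
  map_mul' x y := by
    apply lp.ext; funext k
    simp only [lp.infty_coeFn_mul, Pi.mul_apply]
    by_cases h : k = m <;> simp [h]
  map_star' x := by
    apply lp.ext; funext k
    simp only [lp.coeFn_star, Pi.star_apply]
    by_cases h : k = m <;> simp [h]

/-- Precomposition with a continuous map, as a ⋆-homomorphism. -/
def precompHom (f : C(unitInterval, unitInterval)) :
    C(unitInterval, BL) →⋆ₙₐ[ℂ] C(unitInterval, BL) where
  toFun u := u.comp f
  map_smul' c u := by ext s; simp
  map_zero' := by ext s; simp
  map_add' u v := by ext s; simp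
  map_mul' u v := by ext s; simp
  map_star' u := by ext s; simp

/-- Evaluation at a point of the interval as a ⋆-homomorphism. -/
def evP (t : unitInterval) : C(unitInterval, BL) →⋆ₙₐ[ℂ] BL where
  toFun u := u t
  map_smul' _ _ := rfl
  map_zero' := rfl
  map_add' _ _ := rfl
  map_mul' _ _ := rfl
  map_star' _ := rfl

/-- First projection as a ⋆-homomorphism. -/
def fstHom : Amb B BL →⋆ₙₐ[ℂ] lp (fun k => B k) (⊤ : ENNReal) where
  toFun x := x.1
  map_smul' _ _ := rfl
  map_zero' := rfl
  map_add' _ _ := rfl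
  map_mul' _ _ := rfl
  map_star' _ := rfl

/-- Second projection as a ⋆-homomorphism. -/
def sndHom : Amb B BL →⋆ₙₐ[ℂ] C(unitInterval, BL) where
  toFun x := x.2
  map_smul' _ _ := rfl
  map_zero' := rfl
  map_add' _ _ := rfl
  map_mul' _ _ := rfl
  map_star' _ := rfl

/-- The `k`-th lp coordinate of an ambient element. -/
def G (k : ℕ) : Amb B BL →⋆ₙₐ[ℂ] B k := (lpEv k).comp fstHom

/-- Evaluation of the path component at `t`. -/
def P (t : unitInterval) : Amb B BL →⋆ₙₐ[ℂ] BL := (evP t).comp sndHom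

theorem G_apply (k : ℕ) (x : Amb B BL) : G (B := B) (BL := BL) k x = x.1 k := rfl
theorem P_apply (t : unitInterval) (x : Amb B BL) : P (B := B) (BL := BL) t x = x.2 t := rfl

end Stmt6Aux

end Dev3

noncomputable section Dev4

namespace Stmt6Aux

variable {B : ℕ → Type u} [∀ n, NonUnitalCStarAlgebra (B n)]
variable {BL : Type u} [NonUnitalCStarAlgebra BL]
variable (β : ∀ n, B n →⋆ₙₐ[ℂ] B (n + 1)) (ι : ∀ n, B n →⋆ₙₐ[ℂ] BL)

/-- The closed part of the stage-`m` conditions. -/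
def Cond (m : ℕ) (x : Amb B BL) : Prop :=
  (∀ k < m, x.1 k = 0) ∧ (∀ k, m ≤ k → x.2 (tp k) = ι k (x.1 k)) ∧
    (∀ s ≤ tp m, x.2 s = x.2 (tp m))

/-- Eventual compatibility of the lp-coordinates. -/
def EvComp (x : Amb B BL) : Prop :=
  ∃ K, ∀ k, K ≤ k → x.1 (k + 1) = β k (x.1 k)

theorem amb_proj_simps (x y : Amb B BL) (k : ℕ) (t : unitInterval) (c : ℂ) :
    ((x + y).1 k = x.1 k + y.1 k) ∧ ((x * y).1 k = x.1 k * y.1 k) ∧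
      ((c • x).1 k = c • (x.1 k)) ∧ ((star x).1 k = star (x.1 k)) ∧
      ((0 : Amb B BL).1 k = 0) ∧
      ((x + y).2 t = x.2 t + y.2 t) ∧ ((x * y).2 t = x.2 t * y.2 t) ∧
      ((c • x).2 t = c • (x.2 t)) ∧ ((star x).2 t = star (x.2 t)) ∧
      ((0 : Amb B BL).2 t = 0) := by
  refine ⟨?_, ?_, ?_, ?_, ?_, rfl, rfl, rfl, rfl, rfl⟩
  · have := congrFun (lp.coeFn_add x.1 y.1) k; simpa using this
  · have := congrFun (lp.infty_coeFn_mul x.1 y.1) k; simpa using this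
  · have := congrFun (lp.coeFn_smul c x.1) k; simpa using this
  · have := congrFun (lp.coeFn_star x.1) k; simpa using this
  · have := congrFun (lp.coeFn_zero (E := fun k => B k) (⊤ : ENNReal)) k; simpa using this

/-- The pre-stage algebra of the telescope. -/
def preR (m : ℕ) : NonUnitalStarSubalgebra ℂ (Amb B BL) where
  carrier := {x | Cond ι m x ∧ EvComp β x}
  add_mem' := by
    rintro x y ⟨⟨h1, h2, h3⟩, K, h4⟩ ⟨⟨g1, g2, g3⟩, K', g4⟩
    refine ⟨⟨fun k hk => ?_, fun k hk => ?_, fun s hs => ?_⟩, max K K', fun k hk => ?_⟩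
    · rw [(amb_proj_simps x y k 0 0).1, h1 k hk, g1 k hk, add_zero]
    · rw [(amb_proj_simps x y k (tp k) 0).1, (amb_proj_simps x y k (tp k) 0).2.2.2.2.2.1,
        h2 k hk, g2 k hk, map_add]
    · rw [(amb_proj_simps x y 0 s 0).2.2.2.2.2.1, (amb_proj_simps x y 0 (tp m) 0).2.2.2.2.2.1,
        h3 s hs, g3 s hs]
    · rw [(amb_proj_simps x y (k+1) 0 0).1, (amb_proj_simps x y k 0 0).1,
        h4 k (le_of_max_le_left hk), g4 k (le_of_max_le_right hk), map_add]
  zero_mem' := by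
    refine ⟨⟨fun k _ => rfl, fun k _ => ?_, fun s _ => rfl⟩, 0, fun k _ => ?_⟩
    · show (0 : BL) = ι k ((0 : lp (fun k => B k) (⊤ : ENNReal)) k)
      have := congrFun (lp.coeFn_zero (E := fun k => B k) (⊤ : ENNReal)) k
      simp only [Pi.zero_apply] at this
      rw [this, map_zero]
    · show ((0 : lp (fun k => B k) (⊤ : ENNReal)) : ∀ k, B k) (k+1) =
        β k (((0 : lp (fun k => B k) (⊤ : ENNReal)) : ∀ k, B k) k)
      have h0 := congrFun (lp.coeFn_zero (E := fun k => B k) (⊤ : ENNReal))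
      simp only [Pi.zero_apply] at h0
      rw [h0, h0, map_zero]
  mul_mem' := by
    rintro x y ⟨⟨h1, h2, h3⟩, K, h4⟩ ⟨⟨g1, g2, g3⟩, K', g4⟩
    refine ⟨⟨fun k hk => ?_, fun k hk => ?_, fun s hs => ?_⟩, max K K', fun k hk => ?_⟩
    · rw [(amb_proj_simps x y k 0 0).2.1, h1 k hk, zero_mul]
    · rw [(amb_proj_simps x y k (tp k) 0).2.1, (amb_proj_simps x y k (tp k) 0).2.2.2.2.2.2.1,
        h2 k hk, g2 k hk, map_mul]
    · rw [(amb_proj_simps x y 0 s 0).2.2.2.2.2.2.1,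
        (amb_proj_simps x y 0 (tp m) 0).2.2.2.2.2.2.1, h3 s hs, g3 s hs]
    · rw [(amb_proj_simps x y (k+1) 0 0).2.1, (amb_proj_simps x y k 0 0).2.1,
        h4 k (le_of_max_le_left hk), g4 k (le_of_max_le_right hk), map_mul]
  smul_mem' := by
    rintro c x ⟨⟨h1, h2, h3⟩, K, h4⟩
    refine ⟨⟨fun k hk => ?_, fun k hk => ?_, fun s hs => ?_⟩, K, fun k hk => ?_⟩
    · rw [(amb_proj_simps x x k 0 c).2.2.1, h1 k hk, smul_zero]
    · rw [(amb_proj_simps x x k (tp k) c).2.2.1, (amb_proj_simps x x k (tp k) c).2.2.2.2.2.2.2.1,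
        h2 k hk, map_smul]
    · rw [(amb_proj_simps x x 0 s c).2.2.2.2.2.2.2.1,
        (amb_proj_simps x x 0 (tp m) c).2.2.2.2.2.2.2.1, h3 s hs]
    · rw [(amb_proj_simps x x (k+1) 0 c).2.2.1, (amb_proj_simps x x k 0 c).2.2.1,
        h4 k hk, map_smul]
  star_mem' := by
    rintro x ⟨⟨h1, h2, h3⟩, K, h4⟩
    refine ⟨⟨fun k hk => ?_, fun k hk => ?_, fun s hs => ?_⟩, K, fun k hk => ?_⟩
    · rw [(amb_proj_simps x x k 0 0).2.2.2.1, h1 k hk, star_zero]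
    · rw [(amb_proj_simps x x k (tp k) 0).2.2.2.1,
        (amb_proj_simps x x k (tp k) 0).2.2.2.2.2.2.2.2.1, h2 k hk, map_star]
    · rw [(amb_proj_simps x x 0 s 0).2.2.2.2.2.2.2.2.1,
        (amb_proj_simps x x 0 (tp m) 0).2.2.2.2.2.2.2.2.1, h3 s hs]
    · rw [(amb_proj_simps x x (k+1) 0 0).2.2.2.1, (amb_proj_simps x x k 0 0).2.2.2.1,
        h4 k hk, map_star]

/-- The stage algebras of the telescope: closures of the pre-stage algebras. -/
def R (m : ℕ) : NonUnitalStarSubalgebra ℂ (Amb B BL) := (preR β ι m).topologicalClosure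

instance R_isClosed (m : ℕ) : IsClosed ((R β ι m : Set (Amb B BL))) :=
  NonUnitalStarSubalgebra.isClosed_topologicalClosure _

theorem R_coe (m : ℕ) :
    (R β ι m : Set (Amb B BL)) = closure (preR β ι m : Set (Amb B BL)) := rfl

theorem continuous_coord (k : ℕ) : Continuous (fun x : Amb B BL => x.1 k) := by
  have h1 : Continuous (fun g : lp (fun k => B k) (⊤ : ENNReal) => g k) :=
    map_continuous (lpEv (B := B) k)
  exact h1.comp continuous_fst

theorem continuous_pathev (t : unitInterval) : Continuous (fun x : Amb B BL => x.2 t) :=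
  (continuous_eval_const t).comp continuous_snd

/-- The closed conditions pass to the closure. -/
theorem cond_of_mem_R (m : ℕ) {x : Amb B BL} (hx : x ∈ R β ι m) : Cond ι m x := by
  have hsub : (R β ι m : Set (Amb B BL)) ⊆ {x | Cond ι m x} := by
    rw [R_coe]
    refine closure_minimal (fun y hy => hy.1) ?_
    have c1 : IsClosed {x : Amb B BL | ∀ k < m, x.1 k = 0} := by
      rw [show {x : Amb B BL | ∀ k < m, x.1 k = 0} =
        ⋂ (k : ℕ) (_ : k < m), {x | x.1 k = 0} by ext x; simp]
      exact isClosed_iInter fun k => isClosed_iInter fun _ =>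
        isClosed_eq (continuous_coord k) continuous_const
    have c2 : IsClosed {x : Amb B BL | ∀ k, m ≤ k → x.2 (tp k) = ι k (x.1 k)} := by
      rw [show {x : Amb B BL | ∀ k, m ≤ k → x.2 (tp k) = ι k (x.1 k)} =
        ⋂ (k : ℕ) (_ : m ≤ k), {x | x.2 (tp k) = ι k (x.1 k)} by ext x; simp]
      exact isClosed_iInter fun k => isClosed_iInter fun _ =>
        isClosed_eq (continuous_pathev (tp k))
          ((map_continuous (ι k)).comp (continuous_coord k))
    have c3 : IsClosed {x : Amb B BL | ∀ s ≤ tp m, x.2 s = x.2 (tp m)} := by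
      rw [show {x : Amb B BL | ∀ s ≤ tp m, x.2 s = x.2 (tp m)} =
        ⋂ (s : unitInterval) (_ : s ≤ tp m), {x | x.2 s = x.2 (tp m)} by ext x; simp]
      exact isClosed_iInter fun s => isClosed_iInter fun _ =>
        isClosed_eq (continuous_pathev s) (continuous_pathev (tp m))
    exact (c1.inter (c2.inter c3))
  exact hsub hx

end Stmt6Aux

end Dev4

noncomputable section Dev5

namespace Stmt6Aux

variable {B : ℕ → Type u} [∀ n, NonUnitalCStarAlgebra (B n)]
variable {BL : Type u} [NonUnitalCStarAlgebra BL]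
variable (β : ∀ n, B n →⋆ₙₐ[ℂ] B (n + 1)) (ι : ∀ n, B n →⋆ₙₐ[ℂ] BL)

/-- Product of two ⋆-homomorphisms. -/
def prodHom {X Y Z W : Type u} [NonUnitalCStarAlgebra X] [NonUnitalCStarAlgebra Y]
    [NonUnitalCStarAlgebra Z] [NonUnitalCStarAlgebra W]
    (f : X →⋆ₙₐ[ℂ] Z) (g : Y →⋆ₙₐ[ℂ] W) : X × Y →⋆ₙₐ[ℂ] Z × W where
  toFun x := (f x.1, g x.2)
  map_smul' c x := by simp [Prod.ext_iff]
  map_zero' := by simp [Prod.ext_iff]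
  map_add' x y := by simp [Prod.ext_iff]
  map_mul' x y := by simp [Prod.ext_iff]
  map_star' x := by simp [Prod.ext_iff, map_star]

/-- The ambient connecting map of the telescope system. -/
def Gam (m : ℕ) : Amb B BL →⋆ₙₐ[ℂ] Amb B BL :=
  prodHom (zeroOut m) (precompHom (maxC (tp (m + 1))))

theorem Gam_fst (m : ℕ) (x : Amb B BL) (k : ℕ) :
    (Gam (B := B) (BL := BL) m x).1 k = if k = m then 0 else x.1 k := rfl

theorem Gam_snd (m : ℕ) (x : Amb B BL) (s : unitInterval) :
    (Gam (B := B) (BL := BL) m x).2 s = x.2 (maxC (tp (m + 1)) s) := rfl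

theorem Gam_mapsTo_pre (m : ℕ) :
    Set.MapsTo (Gam (B := B) (BL := BL) m) (preR β ι m : Set (Amb B BL)) (preR β ι (m+1) : Set (Amb B BL)) := by
  rintro x ⟨⟨h1, h2, h3⟩, K, h4⟩
  refine ⟨⟨fun k hk => ?_, fun k hk => ?_, fun s hs => ?_⟩, max K (m+1), fun k hk => ?_⟩
  · rw [Gam_fst]
    rcases Nat.lt_succ_iff_lt_or_eq.mp hk with h | h
    · rw [if_neg (Nat.ne_of_lt h), h1 k h]
    · rw [if_pos h]
  · have hk' : k ≠ m := by omega
    rw [Gam_fst, if_neg hk', Gam_snd, maxC_eq_self (tp_mono hk), h2 k (by omega)]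
  · rw [Gam_snd, Gam_snd, maxC_eq_const hs, maxC_eq_const le_rfl]
  · have hk1 : k ≠ m := by omega
    have hk2 : k + 1 ≠ m := by omega
    rw [Gam_fst, Gam_fst, if_neg hk1, if_neg hk2, h4 k (le_of_max_le_left hk)]

theorem Gam_mapsTo_R (m : ℕ) :
    Set.MapsTo (Gam (B := B) (BL := BL) m) (R β ι m : Set (Amb B BL)) (R β ι (m+1) : Set (Amb B BL)) := by
  rw [R_coe, R_coe]
  intro x hx
  have h1 : Gam (B := B) (BL := BL) m '' closure (preR β ι m : Set (Amb B BL)) ⊆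
      closure (Gam (B := B) (BL := BL) m '' (preR β ι m : Set (Amb B BL))) :=
    image_closure_subset_closure_image (map_continuous _)
  exact closure_mono ((Gam_mapsTo_pre β ι m).image_subset) (h1 ⟨x, hx, rfl⟩)

/-- The connecting maps of the telescope system. -/
def gamHat (m : ℕ) : (R β ι m : NonUnitalStarSubalgebra ℂ (Amb B BL)) →⋆ₙₐ[ℂ] R β ι (m+1) where
  toFun x := ⟨Gam (B := B) (BL := BL) m x.1, Gam_mapsTo_R β ι m x.2⟩
  map_smul' c x := by ext : 1; simp [map_smul]
  map_zero' := by ext : 1; simp [map_zero]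
  map_add' x y := by ext : 1; simp [map_add]
  map_mul' x y := by ext : 1; simp [map_mul]
  map_star' x := by ext : 1; simp [map_star]

/-- The limit maps of the telescope system: evaluation of the path component at `1`. -/
def Lam (m : ℕ) : (R β ι m : NonUnitalStarSubalgebra ℂ (Amb B BL)) →⋆ₙₐ[ℂ] BL where
  toFun x := (x : Amb B BL).2 1
  map_smul' c x := by simp
  map_zero' := by simp
  map_add' x y := by simp
  map_mul' x y := by simp
  map_star' x := by simp

theorem Lam_comp_gamHat (m : ℕ) :
    (Lam β ι (m+1)).comp (gamHat β ι m) = Lam β ι m := by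
  ext x
  show (Gam (B := B) (BL := BL) m (x : Amb B BL)).2 1 = (x : Amb B BL).2 1
  rw [Gam_snd, maxC_one]

end Stmt6Aux

end Dev5

noncomputable section Dev6

namespace Stmt6Aux

variable {B : ℕ → Type u} [∀ n, NonUnitalCStarAlgebra (B n)]
variable {BL : Type u} [NonUnitalCStarAlgebra BL]
variable (β : ∀ n, B n →⋆ₙₐ[ℂ] B (n + 1)) (ι : ∀ n, B n →⋆ₙₐ[ℂ] BL)

theorem tp_gap_pos (m : ℕ) : (0:ℝ) < (tp (m+1) : ℝ) - tp m := by
  have := tp_lt_succ m; linarith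

/-- The ramp function used for the section of the connecting map. -/
def ramp (m : ℕ) : C(unitInterval, ℝ) :=
  ⟨fun s => min 1 (max 0 (((s : ℝ) - tp m) / ((tp (m+1) : ℝ) - tp m))),
    (continuous_const.min ((continuous_const.max
      ((continuous_subtype_val.sub continuous_const).div_const _))))⟩

theorem ramp_nonneg (m : ℕ) (s : unitInterval) : 0 ≤ ramp m s :=
  le_min zero_le_one (le_max_left 0 _)

theorem ramp_le_one (m : ℕ) (s : unitInterval) : ramp m s ≤ 1 := min_le_left _ _

theorem ramp_eq_zero (m : ℕ) {s : unitInterval} (hs : s ≤ tp m) : ramp m s = 0 := by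
  have h1 : ((s : ℝ) - tp m) / ((tp (m+1) : ℝ) - tp m) ≤ 0 :=
    div_nonpos_of_nonpos_of_nonneg (by simpa [sub_nonpos] using hs) (tp_gap_pos m).le
  simp only [ramp, ContinuousMap.coe_mk]
  rw [max_eq_left h1, min_eq_right zero_le_one]

theorem ramp_eq_one (m : ℕ) {s : unitInterval} (hs : tp (m+1) ≤ s) : ramp m s = 1 := by
  have h1 : (1:ℝ) ≤ ((s : ℝ) - tp m) / ((tp (m+1) : ℝ) - tp m) := by
    rw [le_div_iff₀ (tp_gap_pos m), one_mul]
    have : (tp (m+1) : ℝ) ≤ s := hs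
    linarith
  simp only [ramp, ContinuousMap.coe_mk]
  rw [max_eq_right (zero_le_one.trans h1), min_eq_left h1]

/-- Extension-by-a-ramp of a path, the path component of the section. -/
def extend (m : ℕ) (u : C(unitInterval, BL)) : C(unitInterval, BL) :=
  ⟨fun s => ramp m s • u (maxC (tp (m+1)) s),
    ((ramp m).continuous).smul (u.continuous.comp (maxC (tp (m+1))).continuous)⟩

theorem extend_apply (m : ℕ) (u : C(unitInterval, BL)) (s : unitInterval) :
    extend m u s = ramp m s • u (maxC (tp (m+1)) s) := rfl

theorem extend_at_le (m : ℕ) (u : C(unitInterval, BL)) {s : unitInterval} (hs : s ≤ tp m) :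
    extend m u s = 0 := by
  rw [extend_apply, ramp_eq_zero m hs, zero_smul]

theorem extend_at_ge (m : ℕ) (u : C(unitInterval, BL)) {s : unitInterval}
    (hs : tp (m+1) ≤ s) : extend m u s = u s := by
  rw [extend_apply, ramp_eq_one m hs, maxC_eq_self hs, one_smul]

/-- The (nonlinear, continuous) section of the connecting map. -/
def sig (m : ℕ) : Amb B BL → Amb B BL := fun x => (x.1, extend m x.2)

theorem sig_continuous (m : ℕ) : Continuous (sig (B := B) (BL := BL) m) := by
  have hlip : LipschitzWith 1 (extend (BL := BL) m) := by
    refine LipschitzWith.of_dist_le_mul fun u v => ?_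
    rw [NNReal.coe_one, one_mul]
    rw [ContinuousMap.dist_le dist_nonneg]
    intro s
    rw [extend_apply, extend_apply, dist_eq_norm, ← smul_sub]
    calc ‖ramp m s • (u (maxC (tp (m+1)) s) - v (maxC (tp (m+1)) s))‖
        = ‖ramp m s‖ * ‖u (maxC (tp (m+1)) s) - v (maxC (tp (m+1)) s)‖ := norm_smul _ _
      _ ≤ 1 * ‖u (maxC (tp (m+1)) s) - v (maxC (tp (m+1)) s)‖ := by
          apply mul_le_mul_of_nonneg_right _ (norm_nonneg _)
          rw [Real.norm_eq_abs, abs_le]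
          exact ⟨by linarith [ramp_nonneg m s], ramp_le_one m s⟩
      _ ≤ dist u v := by
          rw [one_mul, ← dist_eq_norm]
          exact ContinuousMap.dist_apply_le_dist _
  exact continuous_fst.prodMk (hlip.continuous.comp continuous_snd)

theorem sig_mapsTo_pre (m : ℕ) :
    Set.MapsTo (sig (B := B) (BL := BL) m) (preR β ι (m+1) : Set (Amb B BL))
      (preR β ι m : Set (Amb B BL)) := by
  rintro x ⟨⟨h1, h2, h3⟩, K, h4⟩
  refine ⟨⟨fun k hk => h1 k (by omega), fun k hk => ?_, fun s hs => ?_⟩, K, h4⟩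
  · rcases Nat.lt_or_ge k (m+1) with h | h
    · obtain rfl : m = k := by omega
      show extend m x.2 (tp m) = ι m (x.1 m)
      rw [extend_at_le m x.2 le_rfl, h1 m (Nat.lt_succ_self m), map_zero]
    · show extend m x.2 (tp k) = ι k (x.1 k)
      rw [extend_at_ge m x.2 (tp_mono h), h2 k h]
  · show extend m x.2 s = extend m x.2 (tp m)
    rw [extend_at_le m x.2 hs, extend_at_le m x.2 le_rfl]

theorem Gam_sig (m : ℕ) {x : Amb B BL} (hx : x ∈ preR β ι (m+1)) :
    Gam (B := B) (BL := BL) m (sig m x) = x := by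
  obtain ⟨⟨h1, h2, h3⟩, -⟩ := hx
  refine Prod.ext ?_ ?_
  · apply lp.ext; funext k
    show (if k = m then 0 else x.1 k) = x.1 k
    by_cases h : k = m
    · rw [if_pos h, h, h1 m (Nat.lt_succ_self m)]
    · rw [if_neg h]
  · ext s
    show extend m x.2 (maxC (tp (m+1)) s) = x.2 s
    rcases le_total s (tp (m+1)) with h | h
    · rw [maxC_eq_const h, extend_at_ge m x.2 le_rfl, h3 s h]
    · rw [maxC_eq_self h, extend_at_ge m x.2 h]

theorem gamHat_surjective (m : ℕ) : Function.Surjective (gamHat β ι m) := by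
  intro y
  have hy : (y : Amb B BL) ∈ closure (preR β ι (m+1) : Set (Amb B BL)) := y.2
  have hx : sig m (y : Amb B BL) ∈ R β ι m := by
    rw [← SetLike.mem_coe, R_coe]
    have h1 : sig (B := B) (BL := BL) m '' closure (preR β ι (m+1) : Set (Amb B BL)) ⊆
        closure (sig (B := B) (BL := BL) m '' (preR β ι (m+1) : Set (Amb B BL))) :=
      image_closure_subset_closure_image (sig_continuous m)
    exact closure_mono ((sig_mapsTo_pre β ι m).image_subset) (h1 ⟨y, hy, rfl⟩)
  refine ⟨⟨sig m (y : Amb B BL), hx⟩, ?_⟩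
  have hgs : ∀ z ∈ closure (preR β ι (m+1) : Set (Amb B BL)),
      Gam (B := B) (BL := BL) m (sig m z) = z := by
    have hcl : IsClosed {z : Amb B BL | Gam (B := B) (BL := BL) m (sig m z) = z} :=
      isClosed_eq ((map_continuous (Gam (B := B) (BL := BL) m)).comp (sig_continuous m))
        continuous_id
    intro z hz
    exact closure_minimal (fun w hw => Gam_sig β ι m hw) hcl hz
  exact Subtype.ext (hgs (y : Amb B BL) hy)

end Stmt6Aux

end Dev6

noncomputable section Dev7

namespace Stmt6Aux

variable {B : ℕ → Type u} [∀ n, NonUnitalCStarAlgebra (B n)]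
variable {BL : Type u} [NonUnitalCStarAlgebra BL]
variable (β : ∀ n, B n →⋆ₙₐ[ℂ] B (n + 1)) (ι : ∀ n, B n →⋆ₙₐ[ℂ] BL)

theorem tendsto_tp_I : Tendsto tp atTop (𝓝 (1 : unitInterval)) := by
  rw [Metric.tendsto_atTop]
  intro ε hε
  have h2 : Tendsto (fun k => (2⁻¹ : ℝ) ^ k) atTop (𝓝 0) :=
    tendsto_pow_atTop_nhds_zero_of_lt_one (by norm_num) (by norm_num)
  rw [Metric.tendsto_atTop] at h2
  obtain ⟨N, hN⟩ := h2 ε hε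
  refine ⟨N, fun k hk => ?_⟩
  have := hN k hk
  simp only [dist_zero_right, Real.norm_eq_abs] at this
  have habs : dist (tp k) (1 : unitInterval) = |(2⁻¹:ℝ) ^ k| := by
    rw [Subtype.dist_eq, Real.dist_eq]
    simp only [tp_coe, Set.Icc.coe_one]
    rw [show (1:ℝ) - (2⁻¹:ℝ)^k - 1 = -((2⁻¹:ℝ)^k) by ring, abs_neg]
  rw [habs]
  exact this

/-- The basic elements of the telescope: a tail of transits together with a constant path. -/
def baseElem (n : ℕ) (b : B n) : Amb B BL :=
  (⟨fun k => if h : n ≤ k then transit β h b else 0, by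
      apply memℓp_infty
      refine ⟨‖b‖, ?_⟩
      rintro - ⟨k, rfl⟩
      by_cases h : n ≤ k
      · simpa [h] using norm_transit_le β h b
      · simp [h]⟩,
    ContinuousMap.const _ (ι n b))

theorem baseElem_mem (hcomp : ∀ n, (ι (n + 1)).comp (β n) = ι n) (n : ℕ) (b : B n) :
    baseElem β ι n b ∈ preR β ι n := by
  refine ⟨⟨fun k hk => ?_, fun k hk => ?_, fun s _ => rfl⟩, n, fun k hk => ?_⟩
  · show (if h : n ≤ k then transit β h b else 0) = 0
    rw [dif_neg (by omega)]
  · show ι n b = ι k (if h : n ≤ k then transit β h b else 0)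
    rw [dif_pos hk, iota_transit β hcomp hk b]
  · show (if h : n ≤ k + 1 then transit β h b else 0) =
      β k (if h : n ≤ k then transit β h b else 0)
    rw [dif_pos (by omega : n ≤ k + 1), dif_pos hk]
    exact transit_succ β hk (by omega) b

theorem Lam_baseElem (hcomp : ∀ n, (ι (n + 1)).comp (β n) = ι n) (n : ℕ) (b : B n) :
    Lam β ι n ⟨baseElem β ι n b,
      (preR β ι n).le_topologicalClosure (baseElem_mem β ι hcomp n b)⟩ = ι n b := rfl

theorem dense_lam (hcomp : ∀ n, (ι (n + 1)).comp (β n) = ι n)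
    (hdense : Dense (⋃ n, Set.range (ι n))) :
    Dense (⋃ n, Set.range (Lam β ι n)) := by
  refine Dense.mono ?_ hdense
  rintro - ⟨S, ⟨n, rfl⟩, b, rfl⟩
  exact ⟨_, ⟨n, rfl⟩, ⟨baseElem β ι n b,
    (preR β ι n).le_topologicalClosure (baseElem_mem β ι hcomp n b)⟩,
    Lam_baseElem β ι hcomp n b⟩

/-- Zeroing out all coordinate below `M`, as a ⋆-homomorphism. -/
def zeroBelow (M : ℕ) : lp (fun k => B k) (⊤ : ENNReal) →⋆ₙₐ[ℂ] lp (fun k => B k) (⊤ : ENNReal) where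
  toFun x := ⟨fun k => if k < M then 0 else x k, by
    apply memℓp_infty
    refine ⟨‖x‖, ?_⟩
    rintro - ⟨k, rfl⟩
    by_cases h : k < M
    · simpa [h] using norm_nonneg x
    · simpa [h] using lp.norm_apply_le_norm ENNReal.top_ne_zero x k⟩
  map_smul' c x := by
    apply lp.ext; funext k
    simp only [lp.coeFn_smul, Pi.smul_apply]
    by_cases h : k < M <;> simp [h]
  map_zero' := by
    apply lp.ext; funext k
    simp only [lp.coeFn_zero, Pi.zero_apply]
    by_cases h : k < M <;> simp [h]
  map_add' x y := by
    apply lp.ext; funext k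
    simp only [lp.coeFn_add, Pi.add_apply]
    by_cases h : k < M <;> simp [h]
  map_mul' x y := by
    apply lp.ext; funext k
    simp only [lp.infty_coeFn_mul, Pi.mul_apply]
    by_cases h : k < M <;> simp [h]
  map_star' x := by
    apply lp.ext; funext k
    simp only [lp.coeFn_star, Pi.star_apply]
    by_cases h : k < M <;> simp [h]

/-- The ambient form of the transits of the telescope system. -/
def TrAmb (M : ℕ) : Amb B BL →⋆ₙₐ[ℂ] Amb B BL :=
  prodHom (zeroBelow M) (precompHom (maxC (tp M)))

theorem TrAmb_fst (M : ℕ) (x : Amb B BL) (k : ℕ) :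
    (TrAmb (B := B) (BL := BL) M x).1 k = if k < M then 0 else x.1 k := rfl

theorem TrAmb_snd (M : ℕ) (x : Amb B BL) (s : unitInterval) :
    (TrAmb (B := B) (BL := BL) M x).2 s = x.2 (maxC (tp M) s) := rfl

theorem le_maxC (c s : unitInterval) : c ≤ maxC c s := le_max_right _ _

theorem TrAmb_self {m : ℕ} {x : Amb B BL} (hx : Cond ι m x) :
    TrAmb (B := B) (BL := BL) m x = x := by
  obtain ⟨h1, h2, h3⟩ := hx
  refine Prod.ext ?_ ?_
  · apply lp.ext; funext k
    rw [TrAmb_fst]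
    by_cases h : k < m
    · rw [if_pos h, h1 k h]
    · rw [if_neg h]
  · ext s
    rw [TrAmb_snd]
    rcases le_total s (tp m) with h | h
    · rw [maxC_eq_const h, h3 s h]
    · rw [maxC_eq_self h]

theorem Gam_TrAmb (M : ℕ) (x : Amb B BL) :
    Gam (B := B) (BL := BL) M (TrAmb (B := B) (BL := BL) M x) = TrAmb (B := B) (BL := BL) (M+1) x := by
  refine Prod.ext ?_ ?_
  · apply lp.ext; funext k
    rw [Gam_fst, TrAmb_fst, TrAmb_fst]
    by_cases h : k = M
    · rw [if_pos h, if_pos (by omega)]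
    · rw [if_neg h]
      by_cases h' : k < M
      · rw [if_pos h', if_pos (by omega)]
      · rw [if_neg h', if_neg (by omega)]
  · ext s
    rw [Gam_snd, TrAmb_snd, TrAmb_snd]
    congr 1
    exact maxC_eq_self ((tp_mono (Nat.le_succ M)).trans (le_maxC _ _))

theorem coe_transit_gamHat (n : ℕ) (x : ↥(R β ι n)) (j : ℕ) :
    ((transit (gamHat β ι) (Nat.le_add_right n j) x : ↥(R β ι (n+j))) : Amb B BL) =
      TrAmb (B := B) (BL := BL) (n+j) (x : Amb B BL) := by
  induction j with
  | zero =>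
    rw [transit_self]
    exact (TrAmb_self ι (cond_of_mem_R β ι n x.2)).symm
  | succ j ih =>
    rw [transit_succ (gamHat β ι) (Nat.le_add_right n j) (Nat.le_add_right n (j+1)) x]
    show Gam (B := B) (BL := BL) (n+j) _ = _
    rw [ih, Gam_TrAmb]
    rfl

end Stmt6Aux

end Dev7

noncomputable section Dev8

namespace Stmt6Aux

variable {B : ℕ → Type u} [∀ n, NonUnitalCStarAlgebra (B n)]
variable {BL : Type u} [NonUnitalCStarAlgebra BL]
variable (β : ∀ n, B n →⋆ₙₐ[ℂ] B (n + 1)) (ι : ∀ n, B n →⋆ₙₐ[ℂ] BL)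

theorem path_norm_le (u : C(unitInterval, BL)) {ε : ℝ} (hε : 0 < ε) :
    ∃ J, ∀ M, J ≤ M → ‖u.comp (maxC (tp M))‖ ≤ ‖u 1‖ + ε := by
  obtain ⟨δ, hδ, hu⟩ := Metric.uniformContinuous_iff.mp
    (CompactSpace.uniformContinuous_of_continuous u.continuous) ε hε
  have h2 : Tendsto (fun k => (2⁻¹ : ℝ) ^ k) atTop (𝓝 0) :=
    tendsto_pow_atTop_nhds_zero_of_lt_one (by norm_num) (by norm_num)
  rw [Metric.tendsto_atTop] at h2
  obtain ⟨J, hJ⟩ := h2 δ hδ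
  refine ⟨J, fun M hM => ?_⟩
  rw [ContinuousMap.norm_le _ (by positivity)]
  intro s
  have hdist : dist (maxC (tp M) s) (1 : unitInterval) < δ := by
    have h3 := hJ M hM
    simp only [dist_zero_right, Real.norm_eq_abs, abs_of_nonneg (by positivity : (0:ℝ) ≤ (2⁻¹:ℝ)^M)] at h3
    rw [Subtype.dist_eq, Real.dist_eq, abs_sub_comm,
      abs_of_nonneg (by simpa using (maxC (tp M) s).2.2)]
    have hge : (tp M : ℝ) ≤ (maxC (tp M) s : ℝ) := le_maxC (tp M) s
    rw [tp_coe] at hge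
    simp only [Set.Icc.coe_one]
    linarith
  have := hu hdist
  rw [dist_eq_norm] at this
  calc ‖(u.comp (maxC (tp M))) s‖ = ‖u (maxC (tp M) s)‖ := rfl
    _ ≤ ‖u 1‖ + ‖u (maxC (tp M) s) - u 1‖ := norm_le_insert' _ _
    _ ≤ ‖u 1‖ + ε := by linarith

theorem coord_norm_le (hcomp : ∀ n, (ι (n + 1)).comp (β n) = ι n)
    (hnorm : ∀ (n : ℕ) (a : B n),
      Tendsto (fun m => ‖transit β (Nat.le_add_right n m) a‖) atTop (𝓝 ‖ι n a‖))
    (n : ℕ) (x : ↥(R β ι n)) {ε : ℝ} (hε : 0 < ε) :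
    ∃ J, ∀ k, J ≤ k → ‖(x : Amb B BL).1 k‖ ≤ ‖(x : Amb B BL).2 1‖ + ε := by
  have hx : (x : Amb B BL) ∈ closure (preR β ι n : Set (Amb B BL)) := x.2
  obtain ⟨y, hy, hxy⟩ := Metric.mem_closure_iff.mp hx (ε/3) (by positivity)
  obtain ⟨⟨c1, c2, c3⟩, K0, c4⟩ := hy
  set K := max K0 n with hK
  have hc4 : ∀ k, K ≤ k → y.1 (k+1) = β k (y.1 k) := fun k hk => c4 k (le_of_max_le_left hk)
  have hform : ∀ i, y.1 (K + i) = transit β (Nat.le_add_right K i) (y.1 K) := by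
    intro i
    induction i with
    | zero => rw [transit_self]; rfl
    | succ i ih =>
      show y.1 ((K + i) + 1) = _
      rw [hc4 (K + i) (Nat.le_add_right K i), ih,
        ← transit_succ β (Nat.le_add_right K i) (Nat.le_add_right K (i+1)) (y.1 K)]
  have hval : ι K (y.1 K) = y.2 1 := by
    have hconst : ∀ i, y.2 (tp (K + i)) = ι K (y.1 K) := by
      intro i
      rw [c2 (K + i) (le_trans (le_of_max_le_right le_rfl) (Nat.le_add_right K i)), hform i,
        iota_transit β hcomp (Nat.le_add_right K i) (y.1 K)]
    have htend : Tendsto (fun i => y.2 (tp (K + i))) atTop (𝓝 (y.2 1)) := by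
      have h1 : Tendsto (fun i => K + i) atTop atTop :=
        tendsto_atTop_mono (fun i => Nat.le_add_left i K) tendsto_id
      exact (y.2.continuous.tendsto 1).comp (tendsto_tp_I.comp h1)
    have heq : (fun i => y.2 (tp (K + i))) = fun _ => ι K (y.1 K) := funext hconst
    rw [heq] at htend
    exact tendsto_nhds_unique tendsto_const_nhds htend
  have hKnorm : Tendsto (fun i => ‖y.1 (K + i)‖) atTop (𝓝 ‖y.2 1‖) := by
    have heq : (fun i => ‖y.1 (K + i)‖) =
        fun i => ‖transit β (Nat.le_add_right K i) (y.1 K)‖ := funext fun i => by rw [hform i]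
    rw [heq, ← hval]
    exact hnorm K (y.1 K)
  rw [Metric.tendsto_atTop] at hKnorm
  obtain ⟨N, hN⟩ := hKnorm (ε/3) (by positivity)
  refine ⟨K + N, fun k hk => ?_⟩
  obtain ⟨i, rfl⟩ : ∃ i, k = K + i := ⟨k - K, by omega⟩
  have hiN : N ≤ i := by omega
  have h1 : ‖y.1 (K + i)‖ < ‖y.2 1‖ + ε/3 := by
    have := hN i hiN
    rw [Real.dist_eq, abs_lt] at this
    linarith [this.2]
  have h2 : ‖(x : Amb B BL).1 (K + i) - y.1 (K + i)‖ ≤ dist (x : Amb B BL) y := by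
    have e1 : (x : Amb B BL).1 (K + i) - y.1 (K + i) = ((x : Amb B BL).1 - y.1) (K + i) := by
      have := congrFun (lp.coeFn_sub (x : Amb B BL).1 y.1) (K + i)
      simp only [Pi.sub_apply] at this
      rw [this]
    rw [e1]
    calc ‖((x : Amb B BL).1 - y.1) (K + i)‖ ≤ ‖(x : Amb B BL).1 - y.1‖ :=
          lp.norm_apply_le_norm ENNReal.top_ne_zero _ _
      _ = ‖((x : Amb B BL) - y).1‖ := rfl
      _ ≤ ‖(x : Amb B BL) - y‖ := norm_fst_le _
      _ = dist (x : Amb B BL) y := (dist_eq_norm _ _).symm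
  have h3 : ‖y.2 1 - (x : Amb B BL).2 1‖ ≤ dist (x : Amb B BL) y := by
    calc ‖y.2 1 - (x : Amb B BL).2 1‖ = ‖((x : Amb B BL).2 - y.2) 1‖ := by
          rw [ContinuousMap.sub_apply, norm_sub_rev]
      _ ≤ ‖(x : Amb B BL).2 - y.2‖ := ContinuousMap.norm_coe_le_norm _ _
      _ = ‖((x : Amb B BL) - y).2‖ := rfl
      _ ≤ ‖(x : Amb B BL) - y‖ := norm_snd_le _
      _ = dist (x : Amb B BL) y := (dist_eq_norm _ _).symm
  have h4 : ‖y.2 1‖ ≤ ‖(x : Amb B BL).2 1‖ + ‖y.2 1 - (x : Amb B BL).2 1‖ :=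
    norm_le_insert' _ _
  calc ‖(x : Amb B BL).1 (K + i)‖
      ≤ ‖y.1 (K + i)‖ + ‖(x : Amb B BL).1 (K + i) - y.1 (K + i)‖ := norm_le_insert' _ _
    _ ≤ ‖(x : Amb B BL).2 1‖ + ε := by linarith

theorem normCond (hcomp : ∀ n, (ι (n + 1)).comp (β n) = ι n)
    (hnorm : ∀ (n : ℕ) (a : B n),
      Tendsto (fun m => ‖transit β (Nat.le_add_right n m) a‖) atTop (𝓝 ‖ι n a‖))
    (n : ℕ) (x : ↥(R β ι n)) :
    Tendsto (fun j => ‖transit (gamHat β ι) (Nat.le_add_right n j) x‖) atTop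
      (𝓝 ‖Lam β ι n x‖) := by
  rw [Metric.tendsto_atTop]
  intro ε hε
  obtain ⟨J1, hJ1⟩ := path_norm_le (BL := BL) (x : Amb B BL).2 (half_pos hε)
  obtain ⟨J2, hJ2⟩ := coord_norm_le β ι hcomp hnorm n x (half_pos hε)
  refine ⟨max J1 J2, fun j hj => ?_⟩
  have hnorm_eq : ‖transit (gamHat β ι) (Nat.le_add_right n j) x‖ =
      max ‖(TrAmb (B := B) (BL := BL) (n+j) (x : Amb B BL)).1‖
        ‖(TrAmb (B := B) (BL := BL) (n+j) (x : Amb B BL)).2‖ := by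
    have e1 : ‖transit (gamHat β ι) (Nat.le_add_right n j) x‖ =
        ‖((transit (gamHat β ι) (Nat.le_add_right n j) x : ↥(R β ι (n+j))) : Amb B BL)‖ := rfl
    rw [e1, coe_transit_gamHat, Prod.norm_def]
  have hju : ‖Lam β ι n x‖ = ‖(x : Amb B BL).2 1‖ := rfl
  have hP_le : ‖(TrAmb (B := B) (BL := BL) (n+j) (x : Amb B BL)).2‖ ≤
      ‖(x : Amb B BL).2 1‖ + ε/2 := by
    have e2 : (TrAmb (B := B) (BL := BL) (n+j) (x : Amb B BL)).2 =
        (x : Amb B BL).2.comp (maxC (tp (n+j))) := rfl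
    rw [e2]
    exact hJ1 (n+j) (by omega)
  have hP_ge : ‖(x : Amb B BL).2 1‖ ≤
      ‖(TrAmb (B := B) (BL := BL) (n+j) (x : Amb B BL)).2‖ := by
    have e3 : (x : Amb B BL).2 1 = (TrAmb (B := B) (BL := BL) (n+j) (x : Amb B BL)).2 1 := by
      rw [TrAmb_snd, maxC_one]
    rw [e3]
    exact ContinuousMap.norm_coe_le_norm _ _
  have hS_le : ‖(TrAmb (B := B) (BL := BL) (n+j) (x : Amb B BL)).1‖ ≤
      ‖(x : Amb B BL).2 1‖ + ε/2 := by
    apply lp.norm_le_of_forall_le (by positivity)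
    intro k
    rw [show ((TrAmb (B := B) (BL := BL) (n+j) (x : Amb B BL)).1 k)
      = if k < n+j then 0 else (x : Amb B BL).1 k from rfl]
    by_cases h : k < n + j
    · rw [if_pos h, norm_zero]; positivity
    · rw [if_neg h]
      have : J2 ≤ k := by omega
      linarith [hJ2 k this]
  rw [hnorm_eq, hju, Real.dist_eq, abs_lt]
  constructor
  · have : ‖(x : Amb B BL).2 1‖ ≤ max ‖(TrAmb (B := B) (BL := BL) (n+j) (x : Amb B BL)).1‖
        ‖(TrAmb (B := B) (BL := BL) (n+j) (x : Amb B BL)).2‖ := hP_ge.trans (le_max_right _ _)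
    linarith
  · have : max ‖(TrAmb (B := B) (BL := BL) (n+j) (x : Amb B BL)).1‖
        ‖(TrAmb (B := B) (BL := BL) (n+j) (x : Amb B BL)).2‖ ≤
        ‖(x : Amb B BL).2 1‖ + ε/2 := max_le hS_le hP_le
    linarith

theorem isInductiveLimit_R (hcomp : ∀ n, (ι (n + 1)).comp (β n) = ι n)
    (hdense : Dense (⋃ n, Set.range (ι n)))
    (hnorm : ∀ (n : ℕ) (a : B n),
      Tendsto (fun m => ‖transit β (Nat.le_add_right n m) a‖) atTop (𝓝 ‖ι n a‖)) :
    IsInductiveLimit (gamHat β ι) BL (Lam β ι) :=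
  ⟨Lam_comp_gamHat β ι, dense_lam β ι hcomp hdense, normCond β ι hcomp hnorm⟩

end Stmt6Aux

end Dev8

noncomputable section DevId

namespace Stmt6Aux

/-- The identity ⋆-homomorphism. -/
def idHom (BL : Type u) [NonUnitalCStarAlgebra BL] : BL →⋆ₙₐ[ℂ] BL where
  toFun := id
  map_smul' _ _ := rfl
  map_zero' := rfl
  map_add' _ _ := rfl
  map_mul' _ _ := rfl
  map_star' _ := rfl

end Stmt6Aux

end DevId


/-- If `B` is the limit of an inductive system `(B_n, β_n)` and `α : A → B` is
semiprojective, then there are `n` and `α̃ : A → B_n` such that `β_{∞,n} ∘ α̃` is homotopic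
to `α`. -/
theorem stmt_6 {A : Type u} {BL : Type u} [NonUnitalCStarAlgebra A] [NonUnitalCStarAlgebra BL]
    [SeparableSpace A] [SeparableSpace BL]
    {B : ℕ → Type u} [∀ n, NonUnitalCStarAlgebra (B n)]
    (β : ∀ n, B n →⋆ₙₐ[ℂ] B (n + 1)) (ι : ∀ n, B n →⋆ₙₐ[ℂ] BL)
    (hlim : IsInductiveLimit β BL ι)
    (α : A →⋆ₙₐ[ℂ] BL) (hα : IsSemiprojective.{u} α) :
    ∃ (n : ℕ) (α' : A →⋆ₙₐ[ℂ] B n), HomHomotopic ((ι n).comp α') α := by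
  classical
  obtain ⟨hcomp, hdense, hnorm⟩ := hlim
  obtain ⟨n, ψ, hψ⟩ := hα (fun m => ↥(Stmt6Aux.R β ι m)) (Stmt6Aux.gamHat β ι) BL
    (Stmt6Aux.Lam β ι) (Stmt6Aux.gamHat_surjective β ι)
    (Stmt6Aux.isInductiveLimit_R β ι hcomp hdense hnorm) (Stmt6Aux.idHom BL)
  set sub : ↥(Stmt6Aux.R β ι n) →⋆ₙₐ[ℂ] Stmt6Aux.Amb B BL :=
    NonUnitalStarSubalgebraClass.subtype (Stmt6Aux.R β ι n) with hsub
  refine ⟨n, (Stmt6Aux.lpEv n).comp (Stmt6Aux.fstHom.comp (sub.comp ψ)),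
    (Stmt6Aux.precompHom (Stmt6Aux.maxC (Stmt6Aux.tp n))).comp
      (Stmt6Aux.sndHom.comp (sub.comp ψ)), fun a => ?_, fun a => ?_⟩
  · show ((ψ a : Stmt6Aux.Amb B BL).2.comp (Stmt6Aux.maxC (Stmt6Aux.tp n))) 0 =
      ι n ((ψ a : Stmt6Aux.Amb B BL).1 n)
    have h0 : Stmt6Aux.maxC (Stmt6Aux.tp n) 0 = Stmt6Aux.tp n :=
      Stmt6Aux.maxC_eq_const (Stmt6Aux.tp n).2.1
    have hcond := (Stmt6Aux.cond_of_mem_R β ι n (ψ a).2).2.1 n le_rfl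
    calc ((ψ a : Stmt6Aux.Amb B BL).2.comp (Stmt6Aux.maxC (Stmt6Aux.tp n))) 0
        = (ψ a : Stmt6Aux.Amb B BL).2 (Stmt6Aux.maxC (Stmt6Aux.tp n) 0) := rfl
      _ = (ψ a : Stmt6Aux.Amb B BL).2 (Stmt6Aux.tp n) := by rw [h0]
      _ = ι n ((ψ a : Stmt6Aux.Amb B BL).1 n) := hcond
  · show ((ψ a : Stmt6Aux.Amb B BL).2.comp (Stmt6Aux.maxC (Stmt6Aux.tp n))) 1 = α a
    have h1 : ((ψ a : Stmt6Aux.Amb B BL).2.comp (Stmt6Aux.maxC (Stmt6Aux.tp n))) 1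
        = (ψ a : Stmt6Aux.Amb B BL).2 1 := by
      show (ψ a : Stmt6Aux.Amb B BL).2 (Stmt6Aux.maxC (Stmt6Aux.tp n) 1) = _
      rw [Stmt6Aux.maxC_one]
    rw [h1]
    exact DFunLike.congr_fun hψ a
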